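/- Let n ≥ 2. In the polynomial ring ℝ[x_v : v ∈ {0,1}^n], consider the quartic polynomial D = d₂ + d₃ + ⋯ + d_n − d₁, where d_k = (Σ_r x_{ι_k(0,r)}²)·(Σ_r x_{ι_k(1,r)}²) − (Σ_r x_{ι_k(0,r)} x_{ι_k(1,r)})². Then D is a finite sum of squares of homogeneous polynomials of degree 2. -/

import Mathlib

open MvPolynomial Finset

/-- The multi-index in `{0,1}^n` with `k`-th coordinate `b` and remaining coordinates `r`. -/
def iotaIdx (n : ℕ) (k : Fin n) (b : Bool) (r : {j : Fin n // j ≠ k} → Bool) : Fin n → Bool :=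
  fun j => if h : j = k then b else r ⟨j, h⟩

/-- The `k`-th Gram determinant of the generic binary tensor, as a polynomial in the
variables `x_v`, `v ∈ {0,1}^n`. -/
noncomputable def gramDetPoly (n : ℕ) (k : Fin n) : MvPolynomial (Fin n → Bool) ℝ :=
  (∑ r : {j : Fin n // j ≠ k} → Bool, (X (iotaIdx n k false r)) ^ 2) *
    (∑ r : {j : Fin n // j ≠ k} → Bool, (X (iotaIdx n k true r)) ^ 2) -
  (∑ r : {j : Fin n // j ≠ k} → Bool, X (iotaIdx n k false r) * X (iotaIdx n k true r)) ^ 2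

namespace GramSOS

variable {n : ℕ}

/-- pointwise xor of index vectors -/
def bx (v e : Fin n → Bool) : Fin n → Bool := fun j => xor (v j) (e j)

def zeroIdx (n : ℕ) : Fin n → Bool := fun _ => false

def dl (k : Fin n) : Fin n → Bool := fun j => decide (j = k)

lemma bx_comm (v e : Fin n → Bool) : bx v e = bx e v := by
  funext j; simp [bx, Bool.xor_comm]

lemma bx_bx (v e : Fin n → Bool) : bx (bx v e) e = v := by
  funext j; simp [bx, Bool.xor_assoc]

lemma bx_cancel_left (v e : Fin n → Bool) : bx v (bx v e) = e := by
  funext j; simp [bx, ← Bool.xor_assoc]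

lemma bx_swap (v a b : Fin n → Bool) : bx (bx v a) b = bx (bx v b) a := by
  funext j; simp [bx]; cases v j <;> cases a j <;> cases b j <;> rfl

lemma bx_zero (v : Fin n → Bool) : bx v (zeroIdx n) = v := by
  funext j; simp [bx, zeroIdx]

lemma bx_self (v : Fin n → Bool) : bx v v = zeroIdx n := by
  funext j; simp [bx, zeroIdx]

lemma bx_right_bijective (e : Fin n → Bool) : Function.Bijective (fun v => bx v e) :=
  Function.Involutive.bijective (fun v => bx_bx v e)

lemma bx_left_bijective (v : Fin n → Bool) : Function.Bijective (fun e => bx v e) :=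
  Function.Involutive.bijective (fun e => bx_cancel_left v e)

lemma bx_eq_iff {v w u : Fin n → Bool} : bx v w = u ↔ w = bx v u := by
  constructor
  · rintro rfl; rw [bx_cancel_left]
  · rintro rfl; rw [bx_cancel_left]

lemma bx_dl_apply (v : Fin n → Bool) (k : Fin n) : bx v (dl k) k = !(v k) := by
  simp [bx, dl]

lemma ne_bx_dl (v : Fin n → Bool) (k : Fin n) : v ≠ bx v (dl k) := by
  intro h
  have h2 := congrFun h k
  rw [bx_dl_apply] at h2
  exact absurd h2 (by cases v k <;> simp)

/-- the sign character -/
def sg (ξ v : Fin n → Bool) : ℝ := ∏ j, (if ξ j && v j then (-1:ℝ) else 1)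

lemma sg_symm (ξ v : Fin n → Bool) : sg ξ v = sg v ξ :=
  Finset.prod_congr rfl fun j _ => by rw [Bool.and_comm]

lemma sg_mul (ξ v w : Fin n → Bool) : sg ξ v * sg ξ w = sg ξ (bx v w) := by
  rw [sg, sg, sg, ← Finset.prod_mul_distrib]
  refine Finset.prod_congr rfl fun j _ => ?_
  cases hv : v j <;> cases hw : w j <;> cases hx : ξ j <;> simp [bx, hv, hw, hx]

lemma sg_zero_right (ξ : Fin n → Bool) : sg ξ (zeroIdx n) = 1 := by
  simp [sg, zeroIdx]

lemma sg_sq (ξ v : Fin n → Bool) : sg ξ v * sg ξ v = 1 := by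
  rw [sg_mul, bx_self, sg_zero_right]

lemma sg_vals (ξ v : Fin n → Bool) : sg ξ v = 1 ∨ sg ξ v = -1 :=
  mul_self_eq_one_iff.mp (sg_sq ξ v)

lemma sg_dl (ξ : Fin n → Bool) (k : Fin n) : sg ξ (dl k) = if ξ k then (-1:ℝ) else 1 := by
  rw [sg]
  rw [Finset.prod_eq_single k (fun b _ hb => by simp [dl, hb]) (by simp)]
  simp [dl]

lemma sum_sg_zero : ∑ ξ : Fin n → Bool, sg ξ (zeroIdx n) = (2:ℝ)^n := by
  simp only [sg_zero_right, Finset.sum_const, Finset.card_univ, nsmul_eq_mul, mul_one]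
  rw [Fintype.card_fun]
  simp

lemma sum_sg_eq_zero {u : Fin n → Bool} (hu : u ≠ zeroIdx n) :
    ∑ ξ : Fin n → Bool, sg ξ u = 0 := by
  obtain ⟨j0, hj0⟩ : ∃ j, u j = true := by
    by_contra h
    push_neg at h
    exact hu (funext fun j => by simpa [zeroIdx] using h j)
  have key : ∀ ξ : Fin n → Bool, sg (bx ξ (dl j0)) u = - sg ξ u := by
    intro ξ
    rw [sg_symm, ← sg_mul, sg_symm u ξ, sg_symm u (dl j0)]
    have hval : sg (dl j0) u = -1 := by
      rw [sg, Finset.prod_eq_single j0 (fun b _ hb => by simp [dl, hb]) (by simp)]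
      simp [dl, hj0]
    rw [hval]; ring
  have h1 : ∑ ξ : Fin n → Bool, sg ξ u = ∑ ξ : Fin n → Bool, - sg ξ u := by
    calc ∑ ξ : Fin n → Bool, sg ξ u
        = ∑ ξ : Fin n → Bool, sg (bx ξ (dl j0)) u := by
          refine (Fintype.sum_bijective (fun ξ => bx ξ (dl j0)) (bx_right_bijective _) _ _
            (fun ξ => ?_)).symm
          rfl
      _ = ∑ ξ : Fin n → Bool, - sg ξ u := by
          exact Finset.sum_congr rfl fun ξ _ => key ξ
  rw [Finset.sum_neg_distrib] at h1
  linarith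

lemma sum_sg (u : Fin n → Bool) :
    ∑ ξ : Fin n → Bool, sg ξ u = if u = zeroIdx n then (2:ℝ)^n else 0 := by
  split_ifs with h
  · subst h; exact sum_sg_zero
  · exact sum_sg_eq_zero h

/-- Fourier coefficient quadric -/
noncomputable def LL (e ξ : Fin n → Bool) : MvPolynomial (Fin n → Bool) ℝ :=
  ∑ v : Fin n → Bool, C (sg ξ v) * (X v * X (bx v e))

lemma LL_sq (e ξ : Fin n → Bool) : LL e ξ ^ 2 =
    ∑ v : Fin n → Bool, ∑ w : Fin n → Bool,
      C (sg ξ (bx v w)) * ((X v * X (bx v e)) * (X w * X (bx w e))) := by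
  rw [LL, sq, Finset.sum_mul_sum]
  refine Finset.sum_congr rfl fun v _ => Finset.sum_congr rfl fun w _ => ?_
  rw [← sg_mul, map_mul]; ring

/-- value of the restricted character sum -/
lemma Tk_eval (k : Fin n) (u : Fin n → Bool) :
    ∑ ξ : Fin n → Bool, (if ξ k = true then (1:ℝ) else 0) * sg ξ u =
      if u = zeroIdx n then (2:ℝ)^(n-1) else if u = dl k then -((2:ℝ)^(n-1)) else 0 := by
  have hn1 : (0:ℕ) < n := k.pos
  have h2 : ∀ ξ : Fin n → Bool, 2 * ((if ξ k = true then (1:ℝ) else 0) * sg ξ u)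
      = sg ξ u - sg ξ (bx u (dl k)) := by
    intro ξ
    rw [← sg_mul, sg_dl]
    cases hk : ξ k <;> simp [hk] <;> ring
  have hsum : 2 * ∑ ξ : Fin n → Bool, (if ξ k = true then (1:ℝ) else 0) * sg ξ u
      = (∑ ξ : Fin n → Bool, sg ξ u) - ∑ ξ : Fin n → Bool, sg ξ (bx u (dl k)) := by
    rw [Finset.mul_sum, ← Finset.sum_sub_distrib]
    exact Finset.sum_congr rfl fun ξ _ => h2 ξ
  rw [sum_sg, sum_sg] at hsum
  have hdlne : dl k ≠ zeroIdx n := by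
    intro h
    have := congrFun h k
    simp [dl, zeroIdx] at this
  have hpow : (2:ℝ) * (2:ℝ)^(n-1) = (2:ℝ)^n := by
    rw [← pow_succ']
    congr 1
    omega
  by_cases h0 : u = zeroIdx n
  · subst h0
    have hh : bx (zeroIdx n) (dl k) = dl k := by rw [bx_comm, bx_zero]
    rw [hh] at hsum
    simp only [if_pos rfl, if_neg hdlne, if_true] at hsum ⊢
    linarith
  · by_cases h1 : u = dl k
    · subst h1
      rw [bx_self] at hsum
      simp only [if_neg h0, if_pos rfl, if_true] at hsum ⊢
      linarith
    · have hne2 : bx u (dl k) ≠ zeroIdx n := by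
        intro h
        apply h1
        rw [bx_eq_iff, bx_zero] at h
        exact h.symm
      simp only [if_neg h0, if_neg h1, if_neg hne2] at hsum ⊢
      linarith

lemma ite_C_mul (c : Prop) [Decidable c] (t : MvPolynomial (Fin n → Bool) ℝ) :
    C (R := ℝ) (if c then (1:ℝ) else 0) * t = if c then t else 0 := by
  split_ifs <;> simp

/-- summing the square of LL over ξ with ξ k = 1 -/
lemma sum_xi (e : Fin n → Bool) (k : Fin n) :
    ∑ ξ : Fin n → Bool, C (R := ℝ) (if ξ k = true then (1:ℝ) else 0) * LL e ξ ^ 2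
    = C ((2:ℝ)^(n-1)) * ((∑ v : Fin n → Bool, (X v * X (bx v e))^2)
        - ∑ v : Fin n → Bool,
            (X v * X (bx v e)) * (X (bx v (dl k)) * X (bx (bx v (dl k)) e))) := by
  have step1 : ∀ ξ : Fin n → Bool, C (R := ℝ) (if ξ k = true then (1:ℝ) else 0) * LL e ξ ^ 2
      = ∑ v : Fin n → Bool, ∑ w : Fin n → Bool,
          C ((if ξ k = true then (1:ℝ) else 0) * sg ξ (bx v w))
            * ((X v * X (bx v e)) * (X w * X (bx w e))) := by
    intro ξ
    rw [LL_sq, Finset.mul_sum]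
    refine Finset.sum_congr rfl fun v _ => ?_
    rw [Finset.mul_sum]
    refine Finset.sum_congr rfl fun w _ => ?_
    rw [map_mul]; ring
  calc ∑ ξ : Fin n → Bool, C (R := ℝ) (if ξ k = true then (1:ℝ) else 0) * LL e ξ ^ 2
      = ∑ v : Fin n → Bool, ∑ w : Fin n → Bool,
          C (∑ ξ : Fin n → Bool, (if ξ k = true then (1:ℝ) else 0) * sg ξ (bx v w))
            * ((X v * X (bx v e)) * (X w * X (bx w e))) := by
        rw [Finset.sum_congr rfl fun ξ _ => step1 ξ]
        rw [Finset.sum_comm]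
        refine Finset.sum_congr rfl fun v _ => ?_
        rw [Finset.sum_comm]
        refine Finset.sum_congr rfl fun w _ => ?_
        rw [map_sum, Finset.sum_mul]
    _ = ∑ v : Fin n → Bool,
          (C ((2:ℝ)^(n-1)) * ((X v * X (bx v e)) * (X v * X (bx v e)))
           + C (-((2:ℝ)^(n-1))) * ((X v * X (bx v e))
              * (X (bx v (dl k)) * X (bx (bx v (dl k)) e)))) := by
        refine Finset.sum_congr rfl fun v _ => ?_
        have hvne : v ≠ bx v (dl k) := ne_bx_dl v k
        rw [← Finset.sum_subset (Finset.subset_univ ({v, bx v (dl k)} : Finset (Fin n → Bool)))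
          (fun w _ hw => ?van)]
        · rw [Finset.sum_pair hvne]
          rw [Tk_eval, Tk_eval, bx_self, bx_cancel_left]
          have hdlne : dl k ≠ zeroIdx n := by
            intro h
            have := congrFun h k
            simp [dl, zeroIdx] at this
          rw [if_pos rfl, if_neg hdlne, if_pos rfl]
        case van =>
          rw [Tk_eval]
          have h1 : bx v w ≠ zeroIdx n := by
            intro h
            rw [bx_eq_iff, bx_zero] at h
            exact hw (by simp [h])
          have h2 : bx v w ≠ dl k := by
            intro h
            rw [bx_eq_iff] at h
            exact hw (by simp [h])
          rw [if_neg h1, if_neg h2, map_zero, zero_mul]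
    _ = C ((2:ℝ)^(n-1)) * ((∑ v : Fin n → Bool, (X v * X (bx v e))^2)
        - ∑ v : Fin n → Bool,
            (X v * X (bx v e)) * (X (bx v (dl k)) * X (bx (bx v (dl k)) e))) := by
        rw [Finset.sum_add_distrib, ← Finset.mul_sum, ← Finset.mul_sum, map_neg, neg_mul,
          ← sub_eq_add_neg, ← mul_sub]
        refine congrArg (C ((2:ℝ)^(n-1)) * ·) (congrArg (· - _) ?_)
        exact Finset.sum_congr rfl fun v _ => by rw [sq]

/-- the key factorization over e with e k = 1 -/
lemma key_factor (k : Fin n) (G : (Fin n → Bool) → MvPolynomial (Fin n → Bool) ℝ) :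
    ∑ e : Fin n → Bool, C (R := ℝ) (if e k = true then (1:ℝ) else 0)
        * ∑ v : Fin n → Bool, G v * G (bx v e)
    = 2 * ((∑ v ∈ Finset.univ.filter (fun v => v k = false), G v)
        * (∑ v ∈ Finset.univ.filter (fun v => v k = true), G v)) := by
  have step1 : ∑ e : Fin n → Bool, C (R := ℝ) (if e k = true then (1:ℝ) else 0)
        * ∑ v : Fin n → Bool, G v * G (bx v e)
      = ∑ v : Fin n → Bool, ∑ w : Fin n → Bool,
          (if xor (v k) (w k) = true then G v * G w else 0) := by
    calc ∑ e : Fin n → Bool, C (R := ℝ) (if e k = true then (1:ℝ) else 0)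
          * ∑ v : Fin n → Bool, G v * G (bx v e)
        = ∑ e : Fin n → Bool, ∑ v : Fin n → Bool,
            (if e k = true then G v * G (bx v e) else 0) := by
          refine Finset.sum_congr rfl fun e _ => ?_
          rw [Finset.mul_sum]
          refine Finset.sum_congr rfl fun v _ => ?_
          rw [ite_C_mul]
      _ = ∑ v : Fin n → Bool, ∑ e : Fin n → Bool,
            (if e k = true then G v * G (bx v e) else 0) := Finset.sum_comm
      _ = ∑ v : Fin n → Bool, ∑ w : Fin n → Bool,
            (if xor (v k) (w k) = true then G v * G w else 0) := by
          refine Finset.sum_congr rfl fun v _ => ?_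
          refine Fintype.sum_bijective (fun e => bx v e) (bx_left_bijective v) _ _ fun e => ?_
          cases he : e k <;> simp [bx, he, ← Bool.xor_assoc]
  rw [step1]
  have hsplit := Finset.sum_filter_add_sum_filter_not (Finset.univ : Finset (Fin n → Bool))
    (fun v => v k = false)
    (fun v => ∑ w : Fin n → Bool, (if xor (v k) (w k) = true then G v * G w else 0))
  rw [← hsplit]
  have hA : ∑ v ∈ Finset.univ.filter (fun v => v k = false),
      ∑ w : Fin n → Bool, (if xor (v k) (w k) = true then G v * G w else 0)
      = (∑ v ∈ Finset.univ.filter (fun v => v k = false), G v)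
        * (∑ w ∈ Finset.univ.filter (fun w => w k = true), G w) := by
    rw [Finset.sum_mul_sum]
    refine Finset.sum_congr rfl fun v hv => ?_
    rw [Finset.mem_filter] at hv
    rw [Finset.sum_filter]
    refine Finset.sum_congr rfl fun w _ => ?_
    rw [hv.2]
    cases hw : w k <;> simp [hw]
  have hB : ∑ v ∈ Finset.univ.filter (fun v => ¬ v k = false),
      ∑ w : Fin n → Bool, (if xor (v k) (w k) = true then G v * G w else 0)
      = (∑ v ∈ Finset.univ.filter (fun v => v k = true), G v)
        * (∑ w ∈ Finset.univ.filter (fun w => w k = false), G w) := by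
    rw [Finset.sum_mul_sum]
    have hfe : Finset.univ.filter (fun v : Fin n → Bool => ¬ v k = false)
        = Finset.univ.filter (fun v => v k = true) := by
      refine Finset.filter_congr fun v _ => by simp
    rw [hfe]
    refine Finset.sum_congr rfl fun v hv => ?_
    rw [Finset.mem_filter] at hv
    rw [Finset.sum_filter]
    refine Finset.sum_congr rfl fun w _ => ?_
    rw [hv.2]
    cases hw : w k <;> simp [hw]
  rw [hA, hB]
  ring

lemma iota_k (k : Fin n) (b : Bool) (r : {j : Fin n // j ≠ k} → Bool) :
    iotaIdx n k b r k = b := by simp [iotaIdx]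

lemma bx_iota (k : Fin n) (b : Bool) (r : {j : Fin n // j ≠ k} → Bool) :
    bx (iotaIdx n k b r) (dl k) = iotaIdx n k (!b) r := by
  funext j
  by_cases h : j = k
  · subst h; simp [bx, dl, iotaIdx]
  · simp [bx, dl, iotaIdx, h]

lemma iota_sum {M : Type*} [AddCommMonoid M] (k : Fin n) (b : Bool)
    (f : (Fin n → Bool) → M) :
    ∑ r : {j : Fin n // j ≠ k} → Bool, f (iotaIdx n k b r)
      = ∑ v ∈ Finset.univ.filter (fun v => v k = b), f v := by
  refine Finset.sum_nbij' (fun r => iotaIdx n k b r) (fun v => fun jj => v jj.1)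
    (fun r _ => ?_) (fun v hv => Finset.mem_univ _) (fun r _ => ?_) (fun v hv => ?_)
    (fun r _ => rfl)
  · simp [iota_k]
  · funext jj
    simp [iotaIdx, jj.2]
  · rw [Finset.mem_filter] at hv
    funext j
    by_cases h : j = k
    · subst h; simp [iotaIdx, hv.2]
    · simp [iotaIdx, h]

lemma per_k (k : Fin n) :
    ∑ e : Fin n → Bool, ∑ ξ : Fin n → Bool,
      C (R := ℝ) ((if e k = true then (1:ℝ) else 0) * (if ξ k = true then 1 else 0))
        * LL e ξ ^ 2
    = C ((2:ℝ)^n) * gramDetPoly n k := by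
  have inner : ∀ e : Fin n → Bool,
      ∑ ξ : Fin n → Bool,
        C (R := ℝ) ((if e k = true then (1:ℝ) else 0) * (if ξ k = true then 1 else 0))
          * LL e ξ ^ 2
      = C (R := ℝ) (if e k = true then (1:ℝ) else 0) *
          (C ((2:ℝ)^(n-1)) * ((∑ v : Fin n → Bool, (X v * X (bx v e))^2)
            - ∑ v : Fin n → Bool,
                (X v * X (bx v e)) * (X (bx v (dl k)) * X (bx (bx v (dl k)) e)))) := by
    intro e
    rw [← sum_xi e k, Finset.mul_sum]
    refine Finset.sum_congr rfl fun ξ _ => ?_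
    rw [map_mul]; ring
  rw [Finset.sum_congr rfl fun e _ => inner e]
  have hsplit : ∑ e : Fin n → Bool,
      C (R := ℝ) (if e k = true then (1:ℝ) else 0) *
          (C ((2:ℝ)^(n-1)) * ((∑ v : Fin n → Bool, (X v * X (bx v e))^2)
            - ∑ v : Fin n → Bool,
                (X v * X (bx v e)) * (X (bx v (dl k)) * X (bx (bx v (dl k)) e))))
      = C ((2:ℝ)^(n-1)) *
          ((∑ e : Fin n → Bool, C (R := ℝ) (if e k = true then (1:ℝ) else 0) *
              ∑ v : Fin n → Bool, (X v * X (bx v e))^2)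
           - ∑ e : Fin n → Bool, C (R := ℝ) (if e k = true then (1:ℝ) else 0) *
              ∑ v : Fin n → Bool,
                (X v * X (bx v e)) * (X (bx v (dl k)) * X (bx (bx v (dl k)) e))) := by
    rw [mul_sub, Finset.mul_sum, Finset.mul_sum, ← Finset.sum_sub_distrib]
    refine Finset.sum_congr rfl fun e _ => by ring
  rw [hsplit]
  -- first sum : squares
  have hsq : ∑ e : Fin n → Bool, C (R := ℝ) (if e k = true then (1:ℝ) else 0) *
      ∑ v : Fin n → Bool, (X v * X (bx v e))^2
      = 2 * ((∑ r : {j : Fin n // j ≠ k} → Bool, (X (iotaIdx n k false r) : MvPolynomial (Fin n → Bool) ℝ) ^ 2) *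
             (∑ r : {j : Fin n // j ≠ k} → Bool, (X (iotaIdx n k true r)) ^ 2)) := by
    have h1 : ∀ e : Fin n → Bool, ∑ v : Fin n → Bool,
        ((X v * X (bx v e) : MvPolynomial (Fin n → Bool) ℝ))^2
        = ∑ v : Fin n → Bool, (X v)^2 * (X (bx v e))^2 :=
      fun e => Finset.sum_congr rfl fun v _ => by rw [mul_pow]
    rw [Finset.sum_congr rfl fun e _ => by rw [h1 e]]
    rw [key_factor k (fun v => (X v)^2)]
    rw [iota_sum k false (fun v => (X v : MvPolynomial (Fin n → Bool) ℝ)^2),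
        iota_sum k true (fun v => (X v : MvPolynomial (Fin n → Bool) ℝ)^2)]
  -- second sum : cross terms
  have hcr : ∑ e : Fin n → Bool, C (R := ℝ) (if e k = true then (1:ℝ) else 0) *
      ∑ v : Fin n → Bool,
        (X v * X (bx v e)) * (X (bx v (dl k)) * X (bx (bx v (dl k)) e))
      = 2 * ((∑ r : {j : Fin n // j ≠ k} → Bool,
                (X (iotaIdx n k false r) : MvPolynomial (Fin n → Bool) ℝ) * X (iotaIdx n k true r)) *
             (∑ r : {j : Fin n // j ≠ k} → Bool,
                (X (iotaIdx n k false r)) * X (iotaIdx n k true r))) := by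
    have h1 : ∀ e : Fin n → Bool, ∑ v : Fin n → Bool,
        ((X v * X (bx v e)) * (X (bx v (dl k)) * X (bx (bx v (dl k)) e))
          : MvPolynomial (Fin n → Bool) ℝ)
        = ∑ v : Fin n → Bool,
            ((X v * X (bx v (dl k))) * (X (bx v e) * X (bx (bx v e) (dl k)))) := by
      intro e
      refine Finset.sum_congr rfl fun v _ => ?_
      rw [bx_swap]; ring
    rw [Finset.sum_congr rfl fun e _ => by rw [h1 e]]
    rw [key_factor k (fun v => X v * X (bx v (dl k)))]
    have hf : ∑ v ∈ Finset.univ.filter (fun v => v k = false),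
        ((X v * X (bx v (dl k))) : MvPolynomial (Fin n → Bool) ℝ)
        = ∑ r : {j : Fin n // j ≠ k} → Bool,
            (X (iotaIdx n k false r) : MvPolynomial (Fin n → Bool) ℝ) * X (iotaIdx n k true r) := by
      rw [← iota_sum k false (fun v => (X v * X (bx v (dl k)) : MvPolynomial (Fin n → Bool) ℝ))]
      refine Finset.sum_congr rfl fun r _ => ?_
      rw [bx_iota]
      norm_num
    have ht : ∑ v ∈ Finset.univ.filter (fun v => v k = true),
        ((X v * X (bx v (dl k))) : MvPolynomial (Fin n → Bool) ℝ)
        = ∑ r : {j : Fin n // j ≠ k} → Bool,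
            (X (iotaIdx n k false r) : MvPolynomial (Fin n → Bool) ℝ) * X (iotaIdx n k true r) := by
      rw [← iota_sum k true (fun v => (X v * X (bx v (dl k)) : MvPolynomial (Fin n → Bool) ℝ))]
      refine Finset.sum_congr rfl fun r _ => ?_
      rw [bx_iota]
      norm_num
      ring
    rw [hf, ht]
  rw [hsq, hcr]
  unfold gramDetPoly
  have h2C : (C ((2:ℝ)^n) : MvPolynomial (Fin n → Bool) ℝ) = C ((2:ℝ)^(n-1)) * 2 := by
    have : (2:ℝ)^n = (2:ℝ)^(n-1) * 2 := by
      rw [← pow_succ]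
      congr 1
      have := k.pos
      omega
    rw [this, map_mul, map_ofNat]
  rw [h2C]
  ring

/-- the combined coefficient -/
noncomputable def cful (k0 : Fin n) (e ξ : Fin n → Bool) : ℝ :=
  (∑ k ∈ Finset.univ.erase k0,
      (if e k = true then (1:ℝ) else 0) * (if ξ k = true then 1 else 0))
    - (if e k0 = true then (1:ℝ) else 0) * (if ξ k0 = true then 1 else 0)

lemma main_id (k0 : Fin n) :
    ∑ e : Fin n → Bool, ∑ ξ : Fin n → Bool, C (cful k0 e ξ) * LL e ξ ^ 2
    = C ((2:ℝ)^n) *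
        ((∑ k ∈ Finset.univ.erase k0, gramDetPoly n k) - gramDetPoly n k0) := by
  have expand : ∀ e ξ : Fin n → Bool, C (R := ℝ) (cful k0 e ξ) * LL e ξ ^ 2
      = (∑ k ∈ Finset.univ.erase k0,
          C ((if e k = true then (1:ℝ) else 0) * (if ξ k = true then 1 else 0)) * LL e ξ ^ 2)
        - C ((if e k0 = true then (1:ℝ) else 0) * (if ξ k0 = true then 1 else 0))
            * LL e ξ ^ 2 := by
    intro e ξ
    rw [cful, map_sub, map_sum, sub_mul, Finset.sum_mul]
  rw [Finset.sum_congr rfl fun e _ => Finset.sum_congr rfl fun ξ _ => expand e ξ]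
  rw [Finset.sum_congr rfl fun e (_ : e ∈ Finset.univ) => Finset.sum_sub_distrib _ _,
    Finset.sum_sub_distrib]
  have hswap : ∑ e : Fin n → Bool, ∑ ξ : Fin n → Bool,
      ∑ k ∈ Finset.univ.erase k0,
        C (R := ℝ) ((if e k = true then (1:ℝ) else 0) * (if ξ k = true then 1 else 0))
          * LL e ξ ^ 2
      = ∑ k ∈ Finset.univ.erase k0, ∑ e : Fin n → Bool, ∑ ξ : Fin n → Bool,
        C ((if e k = true then (1:ℝ) else 0) * (if ξ k = true then 1 else 0))
          * LL e ξ ^ 2 := by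
    rw [Finset.sum_congr rfl fun e (_ : e ∈ Finset.univ) => Finset.sum_comm]
    exact Finset.sum_comm
  rw [hswap]
  rw [Finset.sum_congr rfl fun k _ => per_k k, per_k k0, mul_sub, Finset.mul_sum]

lemma LL_zero {e ξ : Fin n → Bool} (h : sg ξ e = -1) : LL e ξ = 0 := by
  have h1 : LL e ξ = C (sg ξ e) * LL e ξ := by
    rw [LL, Finset.mul_sum]
    refine Fintype.sum_bijective (fun v => bx v e) (bx_right_bijective e) _ _ fun v => ?_
    rw [bx_bx, ← sg_mul, map_mul]
    have hC : (C (sg ξ e) : MvPolynomial (Fin n → Bool) ℝ) * C (sg ξ e) = 1 := by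
      rw [← map_mul, sg_sq, map_one]
    calc C (sg ξ v) * (X v * X (bx v e))
        = (C (sg ξ e) * C (sg ξ e)) * (C (sg ξ v) * (X v * X (bx v e))) := by
          rw [hC, one_mul]
      _ = C (sg ξ e) * (C (sg ξ v) * C (sg ξ e) * (X (bx v e) * X v)) := by ring
  rw [h, map_neg, map_one, neg_one_mul] at h1
  have h3 : LL e ξ + LL e ξ = 0 := by
    nth_rewrite 2 [h1]
    rw [add_neg_cancel]
  have h4 : (2 : MvPolynomial (Fin n → Bool) ℝ) * LL e ξ = 0 := by
    rw [two_mul]; exact h3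
  rcases mul_eq_zero.mp h4 with h5 | h5
  · exact absurd h5 two_ne_zero
  · exact h5

lemma cful_nonneg {k0 : Fin n} {e ξ : Fin n → Bool} (h : sg ξ e = 1) :
    0 ≤ cful k0 e ξ := by
  have hprod : ∀ k : Fin n,
      (if e k = true then (1:ℝ) else 0) * (if ξ k = true then 1 else 0)
        = if (e k && ξ k) = true then 1 else 0 := by
    intro k
    cases hek : e k <;> cases hxk : ξ k <;> simp [hek, hxk]
  rw [cful, Finset.sum_congr rfl fun k _ => hprod k, hprod, Finset.sum_boole]
  rw [sg_symm] at h
  have hpar : sg e ξ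
      = (-1:ℝ) ^ (Finset.univ.filter (fun k => (e k && ξ k) = true)).card := by
    rw [sg, Finset.prod_ite (fun _ => (-1:ℝ)) (fun _ => (1:ℝ)), Finset.prod_const,
      Finset.prod_const_one, mul_one]
  rw [hpar] at h
  have heven : Even (Finset.univ.filter (fun k => (e k && ξ k) = true)).card :=
    (neg_one_pow_eq_one_iff_even (by norm_num)).mp h
  by_cases h0 : (e k0 && ξ k0) = true
  · rw [if_pos h0]
    have hk0mem : k0 ∈ Finset.univ.filter (fun k => (e k && ξ k) = true) :=
      Finset.mem_filter.mpr ⟨Finset.mem_univ _, h0⟩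
    have hcard2 : 2 ≤ (Finset.univ.filter (fun k => (e k && ξ k) = true)).card := by
      obtain ⟨c, hc⟩ := heven
      have hpos : 0 < (Finset.univ.filter (fun k => (e k && ξ k) = true)).card :=
        Finset.card_pos.mpr ⟨k0, hk0mem⟩
      omega
    have hfe : (Finset.univ.erase k0).filter (fun k => (e k && ξ k) = true)
        = (Finset.univ.filter (fun k => (e k && ξ k) = true)).erase k0 :=
      Finset.filter_erase _ k0 Finset.univ
    rw [hfe, Finset.card_erase_of_mem hk0mem]
    have : (1:ℝ) ≤ ((Finset.univ.filter (fun k => (e k && ξ k) = true)).card - 1 : ℕ) := by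
      exact_mod_cast Nat.one_le_iff_ne_zero.mpr (by omega)
    linarith
  · rw [if_neg h0, sub_zero]
    positivity

lemma LL_homog (e ξ : Fin n → Bool) : (LL e ξ).IsHomogeneous 2 := by
  apply MvPolynomial.IsHomogeneous.sum
  intro v _
  have h1 : (C (sg ξ v) : MvPolynomial (Fin n → Bool) ℝ).IsHomogeneous 0 :=
    isHomogeneous_C _ _
  have h2 := (isHomogeneous_X ℝ v).mul (isHomogeneous_X ℝ (bx v e))
  have h3 := h1.mul h2
  simpa using h3

end GramSOS

open GramSOS in
/-- The quartic `d₂ + ⋯ + d_n - d₁` is a sum of squares of homogeneous quadrics. -/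
theorem gramDiff_isSumOfSquares (n : ℕ) (hn : 2 ≤ n) :
    ∃ (m : ℕ) (p : Fin m → MvPolynomial (Fin n → Bool) ℝ),
      (∀ i : Fin m, (p i).IsHomogeneous 2) ∧
      (∑ k ∈ Finset.univ.erase (⟨0, by omega⟩ : Fin n), gramDetPoly n k) -
          gramDetPoly n ⟨0, by omega⟩ =
        ∑ i : Fin m, (p i) ^ 2 := by
  classical
  set k0 : Fin n := ⟨0, by omega⟩ with hk0
  let E := Fintype.equivFin ((Fin n → Bool) × (Fin n → Bool))
  let q : (Fin n → Bool) × (Fin n → Bool) → MvPolynomial (Fin n → Bool) ℝ :=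
    fun pr => Real.sqrt (cful k0 pr.1 pr.2 / 2^n) • LL pr.1 pr.2
  refine ⟨Fintype.card ((Fin n → Bool) × (Fin n → Bool)), fun i => q (E.symm i),
    fun i => ?_, ?_⟩
  · show (Real.sqrt _ • LL _ _).IsHomogeneous 2
    rw [smul_eq_C_mul]
    have h1 : (C (Real.sqrt (cful k0 (E.symm i).1 (E.symm i).2 / 2^n))
        : MvPolynomial (Fin n → Bool) ℝ).IsHomogeneous 0 := isHomogeneous_C _ _
    simpa using h1.mul (LL_homog (E.symm i).1 (E.symm i).2)
  · have hq : ∀ e ξ : Fin n → Bool,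
        (Real.sqrt (cful k0 e ξ / 2^n) • LL e ξ)^2
          = C ((2:ℝ)^n)⁻¹ * (C (cful k0 e ξ) * LL e ξ ^ 2) := by
      intro e ξ
      rcases sg_vals ξ e with hs | hs
      · have hc : 0 ≤ cful k0 e ξ / 2^n :=
          div_nonneg (cful_nonneg hs) (by positivity)
        rw [smul_pow, Real.sq_sqrt hc, smul_eq_C_mul, ← mul_assoc, ← map_mul]
        congr 2
        field_simp
      · rw [LL_zero hs]
        simp
    have hsum : ∑ i : Fin (Fintype.card ((Fin n → Bool) × (Fin n → Bool))),
        q (E.symm i) ^ 2 = ∑ pr : (Fin n → Bool) × (Fin n → Bool), q pr ^ 2 :=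
      Equiv.sum_comp E.symm (fun pr => q pr ^ 2)
    rw [hsum, Fintype.sum_prod_type]
    have hrw : ∑ e : Fin n → Bool, ∑ ξ : Fin n → Bool, q (e, ξ) ^ 2
        = C ((2:ℝ)^n)⁻¹ * ∑ e : Fin n → Bool, ∑ ξ : Fin n → Bool,
            C (cful k0 e ξ) * LL e ξ ^ 2 := by
      rw [Finset.mul_sum]
      refine Finset.sum_congr rfl fun e _ => ?_
      rw [Finset.mul_sum]
      exact Finset.sum_congr rfl fun ξ _ => hq e ξ
    rw [hrw, main_id k0, ← mul_assoc, ← map_mul, inv_mul_cancel₀ (by positivity), map_one,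
      one_mul]
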